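/- Let R be a finitely generated commutative ring and m a maximal ideal of R. Then the quotient field R/m is finite. -/

import Mathlib

instance : IsJacobsonRing ℤ := by
  rw [isJacobsonRing_iff_prime_eq]
  intro P hP
  rcases eq_or_ne P ⊥ with rfl | hne
  · refine le_antisymm ?_ Ideal.le_jacobson
    intro x hx
    rw [Ideal.mem_jacobson_bot] at hx
    simp only [Ideal.mem_bot]
    have h1 := Int.isUnit_iff.mp (hx 1)
    have h2 := Int.isUnit_iff.mp (hx (-1))
    simp at h1 h2
    omega
  · haveI : P.IsMaximal := IsPrime.to_maximal_ideal hne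
    exact Ideal.jacobson_eq_self_of_isMaximal

/-- Every maximal ideal of a finitely generated commutative ring has finite residue
field. -/
theorem residueField_finite_of_finiteType (R : Type*) [CommRing R]
    (hR : Algebra.FiniteType ℤ R) (m : Ideal R) [m.IsMaximal] :
    Finite (R ⧸ m) := by
  letI : Field (R ⧸ m) := Ideal.Quotient.field m
  haveI : Algebra.FiniteType ℤ (R ⧸ m) :=
    Algebra.FiniteType.of_surjective (Ideal.Quotient.mkₐ ℤ m)
      Ideal.Quotient.mk_surjective
  haveI : Module.Finite ℤ (R ⧸ m) := finite_of_finite_type_of_isJacobsonRing ℤ _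
  haveI : Algebra.IsIntegral ℤ (R ⧸ m) := Algebra.IsIntegral.of_finite ℤ _
  obtain ⟨p, hp⟩ := CharP.exists (R ⧸ m)
  rcases CharP.char_is_prime_or_zero (R ⧸ m) p with hprime | rfl
  · haveI : Fact p.Prime := ⟨hprime⟩
    letI : Algebra (ZMod p) (R ⧸ m) := ZMod.algebra _ p
    haveI : Module.Finite (ZMod p) (R ⧸ m) :=
      Module.Finite.of_restrictScalars_finite ℤ (ZMod p) (R ⧸ m)
    exact Module.finite_of_finite (ZMod p)
  · haveI : CharZero (R ⧸ m) := CharP.charP_to_charZero _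
    have hinj : Function.Injective (algebraMap ℤ (R ⧸ m)) := by
      exact (algebraMap ℤ (R ⧸ m)).injective_int
    have : IsField ℤ := (Algebra.IsIntegral.isField_iff_isField hinj).mpr
      (Field.toIsField _)
    exact absurd this Int.not_isField
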